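/- Let X ⊆ ℤ² be a finite set and i ∈ {1,2}. The number of c_i-components of X equals the number of connected components of the row component graph R(X,c_i). In particular, if X is c_i-connected then R(X,c_i) is connected. -/

import Mathlib

/-- Points of the digital plane. -/
abbrev Pt : Type := ℤ × ℤ

/-- `c_i`-adjacency on `ℤ²` (for `i = 1` or `i = 2`). -/
def cAdj (i : ℕ) (x y : Pt) : Prop :=
  if i = 1 then |x.1 - y.1| + |x.2 - y.2| ≤ 1
  else |x.1 - y.1| ≤ 1 ∧ |x.2 - y.2| ≤ 1

/-- The adjacency induced on a subset of `ℤ²`. -/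
def subAdj (i : ℕ) (X : Set Pt) (x y : X) : Prop := cAdj i x.1 y.1

/-- Digital continuity of a map between digital images. -/
def DigCont {α β : Type} (κ : α → α → Prop) (δ : β → β → Prop) (f : α → β) : Prop :=
  ∀ x y, κ x y → δ (f x) (f y)

/-- The standard (`c_1`) adjacency on `ℕ`, used for digital intervals. -/
def natAdj (s t : ℕ) : Prop := s = t ∨ s + 1 = t ∨ t + 1 = s

/-- The two normal product adjacencies on `α × ℕ`. -/
def prodAdj (i : ℕ) {α : Type} (κ : α → α → Prop) (p q : α × ℕ) : Prop :=
  if i = 1 then (κ p.1 q.1 ∧ p.2 = q.2) ∨ (p.1 = q.1 ∧ natAdj p.2 q.2)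
  else κ p.1 q.1 ∧ natAdj p.2 q.2

/-- `f` and `g` are `i`-homotopic: there is a continuous
`H : X ×_i [0,m]_ℤ → Y` with `H(·,0) = f` and `H(·,m) = g`. -/
def Homotopic (i : ℕ) {α β : Type} (κ : α → α → Prop) (δ : β → β → Prop)
    (f g : α → β) : Prop :=
  ∃ (m : ℕ) (H : α → ℕ → β),
    (∀ x, H x 0 = f x) ∧ (∀ x, H x m = g x) ∧
    (∀ x y s t, s ≤ m → t ≤ m → prodAdj i κ (x, s) (y, t) → δ (H x s) (H y t))

/-- `i`-homotopy equivalence of digital images. -/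
def HtpyEquiv (i : ℕ) {α β : Type} (κ : α → α → Prop) (δ : β → β → Prop) : Prop :=
  ∃ (f : α → β) (g : β → α),
    DigCont κ δ f ∧ DigCont δ κ g ∧
    Homotopic i κ κ (g ∘ f) id ∧ Homotopic i δ δ (f ∘ g) id

/-- Homotopy equivalence of digital pictures `(X, c_i, c_j)` and `(Y, c_i, c_j)`. -/
def PicHtpyEquiv (i j : ℕ) (X Y : Set Pt) : Prop :=
  HtpyEquiv i (subAdj i X) (subAdj i Y) ∧ HtpyEquiv j (subAdj j Xᶜ) (subAdj j Yᶜ)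

/-- Isomorphism of digital images: a continuous bijection with continuous inverse. -/
def DigIso {α β : Type} (κ : α → α → Prop) (δ : β → β → Prop) : Prop :=
  ∃ e : α ≃ β, DigCont κ δ ⇑e ∧ DigCont δ κ ⇑e.symm

/-- Isomorphism of digital pictures. -/
def PicIso (i j : ℕ) (X Y : Set Pt) : Prop :=
  DigIso (subAdj i X) (subAdj i Y) ∧ DigIso (subAdj j Xᶜ) (subAdj j Yᶜ)

/-- `x` and `y` are joined by a `c_i`-path inside `A`. -/
def ChainIn (i : ℕ) (A : Set Pt) (x y : Pt) : Prop :=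
  ∃ (n : ℕ) (c : ℕ → Pt), c 0 = x ∧ c n = y ∧ (∀ k ≤ n, c k ∈ A) ∧
    ∀ k < n, cAdj i (c k) (c (k + 1))

/-- `A` is `c_i`-connected. -/
def Conn (i : ℕ) (A : Set Pt) : Prop := ∀ x ∈ A, ∀ y ∈ A, ChainIn i A x y

/-- The `c_i`-component of `p` in `A`. -/
def compOf (i : ℕ) (A : Set Pt) (p : Pt) : Set Pt := {y | ChainIn i A p y}

/-- The digital picture `(X, c_i, c_j)` has no hole: every `c_j`-component
of the complement of `X` is infinite. -/
def NoHole (j : ℕ) (X : Set Pt) : Prop := ∀ p ∈ Xᶜ, (compOf j Xᶜ p).Infinite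

/-- The row of `X` at height `k`. -/
def rowOf (X : Set Pt) (k : ℤ) : Set Pt := X ∩ {p | p.2 = k}

/-- `r` is a row component of `(X, c_i)`: a `c_i`-component of a row of `X`. -/
def IsRowComp (i : ℕ) (X : Set Pt) (r : Set Pt) : Prop :=
  ∃ (k : ℤ) (p : Pt), p ∈ rowOf X k ∧ r = compOf i (rowOf X k) p

/-- Two subsets of `ℤ²` are `c_i`-adjacent. -/
def setAdj (i : ℕ) (A B : Set Pt) : Prop := ∃ a ∈ A, ∃ b ∈ B, cAdj i a b

/-- The edge relation of the row component graph `R(X, c_i)`: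
two distinct row components joined when they are `c_i`-adjacent. -/
def rcgAdj (i : ℕ) (X : Set Pt) (r s : Set Pt) : Prop :=
  IsRowComp i X r ∧ IsRowComp i X s ∧ r ≠ s ∧ setAdj i r s

/-- The row component graph `R(X, c_i)` is acyclic: there is no cycle of
`k ≥ 3` distinct row components with consecutive ones adjacent. -/
def RCGAcyclic (i : ℕ) (X : Set Pt) : Prop :=
  ¬ ∃ (k : ℕ) (r : ℕ → Set Pt), 3 ≤ k ∧
    (∀ t < k, IsRowComp i X (r t)) ∧
    (∀ t < k, ∀ t' < k, r t = r t' → t = t') ∧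
    (∀ t, t + 1 < k → rcgAdj i X (r t) (r (t + 1))) ∧
    rcgAdj i X (r (k - 1)) (r 0)

/-- The row component graph `R(X, c_i)` is connected. -/
def RCGConnected (i : ℕ) (X : Set Pt) : Prop :=
  ∀ r s : Set Pt, IsRowComp i X r → IsRowComp i X s →
    Relation.ReflTransGen (rcgAdj i X) r s

/-- A digital image is `i`-contractible: the identity is `i`-homotopic to a constant map. -/
def Contractible (i : ℕ) {α : Type} (κ : α → α → Prop) : Prop :=
  ∃ x₀ : α, Homotopic i κ κ id (fun _ => x₀)

/-- Row-convexity. -/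
def RowConvex (X : Set Pt) : Prop :=
  ∀ a b c k : ℤ, (a, k) ∈ X → (c, k) ∈ X → a ≤ b → b ≤ c → (b, k) ∈ X

/-- Column-convexity. -/
def ColConvex (X : Set Pt) : Prop :=
  ∀ a b c k : ℤ, (k, a) ∈ X → (k, c) ∈ X → a ≤ b → b ≤ c → (k, b) ∈ X

/-- The row-convex hull of `X`. -/
def Hr (X : Set Pt) : Set Pt := ⋂₀ {S | RowConvex S ∧ X ⊆ S}

/-- The column-convex hull of `X`. -/
def Hc (X : Set Pt) : Set Pt := ⋂₀ {S | ColConvex S ∧ X ⊆ S}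

/-- The rc-convex hull of `X`. -/
def Hrc (X : Set Pt) : Set Pt := ⋂₀ {S | (RowConvex S ∧ ColConvex S) ∧ X ⊆ S}

/-- A loop of length `m` inside `Z`: a continuous `γ : [0,m]_ℤ → Z` with `γ 0 = γ m`. -/
def LoopIn (j : ℕ) (Z : Set Pt) (m : ℕ) (γ : ℕ → Pt) : Prop :=
  γ 0 = γ m ∧ (∀ t ≤ m, γ t ∈ Z) ∧ ∀ t < m, cAdj j (γ t) (γ (t + 1))

/-- The loop `γ` is `j`-contractible in `Z`: there is a `j`-homotopy in `Z` from `γ`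
to the constant loop at `γ 0` whose every stage is a loop based at `γ 0`. -/
def LoopContractibleIn (j : ℕ) (Z : Set Pt) (m : ℕ) (γ : ℕ → Pt) : Prop :=
  ∃ (K : ℕ) (H : ℕ → ℕ → Pt),
    (∀ t, H t 0 = γ t) ∧ (∀ t, H t K = γ 0) ∧
    (∀ k ≤ K, H 0 k = γ 0 ∧ H m k = γ 0) ∧
    (∀ t ≤ m, ∀ k ≤ K, H t k ∈ Z) ∧
    (∀ s t k l, s ≤ m → t ≤ m → k ≤ K → l ≤ K →
      prodAdj j natAdj (s, k) (t, l) → cAdj j (H s k) (H t l))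

/-- The union of the infinite `c_j`-components of the complement of `X`. -/
def InfPart (j : ℕ) (X : Set Pt) : Set Pt := {p | p ∈ Xᶜ ∧ (compOf j Xᶜ p).Infinite}

/-- The outer perimeter of the digital picture `(X, c_i, c_j)`: the least length of a
non-`j`-contractible loop in the infinite component of the complement of `X`, or `1`
if no such loop exists.  (It depends only on `j` and `X`.) -/
noncomputable def outerPerim (j : ℕ) (X : Set Pt) : ℕ := by
  classical
  exact if (∃ m γ, LoopIn j (InfPart j X) m γ ∧ ¬ LoopContractibleIn j (InfPart j X) m γ)
    then sInf {m | ∃ γ, LoopIn j (InfPart j X) m γ ∧ ¬ LoopContractibleIn j (InfPart j X) m γ}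
    else 1

/-- The digital rectangle `I_{n,m} = [1,n]_ℤ × [1,m]_ℤ`. -/
def Irect (n m : ℤ) : Set Pt := Set.Icc 1 n ×ˢ Set.Icc 1 m

/-- A finite digital image is `i`-reducible when it is `i`-homotopy equivalent to a
digital image with strictly fewer points. -/
def Reducible (i : ℕ) {α : Type} (κ : α → α → Prop) : Prop :=
  ∃ (β : Type) (δ : β → β → Prop), Reflexive δ ∧ Symmetric δ ∧ Finite β ∧
    Nat.card β < Nat.card α ∧ HtpyEquiv i κ δ

/- ### Auxiliary lemmas for Statement 6 -/

lemma cAdj_refl (i : ℕ) (x : Pt) : cAdj i x x := by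
  unfold cAdj; split <;> simp

lemma cAdj_symm {i : ℕ} {x y : Pt} (h : cAdj i x y) : cAdj i y x := by
  unfold cAdj at h ⊢
  split at h <;> simp_all [abs_sub_comm]

/-- One step of a chain inside `A`. -/
def stepRel (i : ℕ) (A : Set Pt) (a b : Pt) : Prop := a ∈ A ∧ b ∈ A ∧ cAdj i a b

lemma stepRel_symm {i : ℕ} {A : Set Pt} : Symmetric (stepRel i A) :=
  fun _ _ h => ⟨h.2.1, h.1, cAdj_symm h.2.2⟩

lemma chainIn_iff {i : ℕ} {A : Set Pt} {x y : Pt} :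
    ChainIn i A x y ↔ x ∈ A ∧ Relation.ReflTransGen (stepRel i A) x y := by
  constructor
  · rintro ⟨n, c, h0, hn, hmem, hadj⟩
    subst h0; subst hn
    refine ⟨hmem 0 (Nat.zero_le _), ?_⟩
    induction n with
    | zero => exact .refl
    | succ n ih =>
      exact (ih (fun k hk => hmem k (by omega)) (fun k hk => hadj k (by omega))).tail
        ⟨hmem n (by omega), hmem (n + 1) le_rfl, hadj n (by omega)⟩
  · rintro ⟨hx, h⟩
    induction h with
    | refl =>
      exact ⟨0, fun _ => x, rfl, rfl, fun _ _ => hx, fun k hk => absurd hk (by omega)⟩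
    | @tail b c hab hbc ih =>
      obtain ⟨n, cc, h0, hn, hmem, hadj⟩ := ih
      refine ⟨n + 1, fun k => if k ≤ n then cc k else c, by simp [h0],
        by simp, ?_, ?_⟩
      · intro k hk
        by_cases hkn : k ≤ n
        · simpa [hkn] using hmem k hkn
        · simpa [hkn] using hbc.2.1
      · intro k hk
        rcases Nat.lt_or_ge k n with h1 | h1
        · simpa [Nat.le_of_lt h1, Nat.succ_le_of_lt h1] using hadj k h1
        · have hkn : k = n := by omega
          subst hkn
          simp only [le_refl, if_pos, if_neg (by omega : ¬ k + 1 ≤ k)]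
          rw [hn]
          exact hbc.2.2

lemma chainIn_refl {i : ℕ} {A : Set Pt} {x : Pt} (hx : x ∈ A) : ChainIn i A x x :=
  chainIn_iff.2 ⟨hx, .refl⟩

lemma chainIn_mem_left {i : ℕ} {A : Set Pt} {x y : Pt} (h : ChainIn i A x y) : x ∈ A :=
  (chainIn_iff.1 h).1

lemma chainIn_mem_right {i : ℕ} {A : Set Pt} {x y : Pt} (h : ChainIn i A x y) : y ∈ A := by
  obtain ⟨n, c, h0, hn, hmem, _⟩ := h
  exact hn ▸ hmem n le_rfl

lemma chainIn_symm {i : ℕ} {A : Set Pt} {x y : Pt} (h : ChainIn i A x y) :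
    ChainIn i A y x :=
  chainIn_iff.2 ⟨chainIn_mem_right h,
    (by haveI : Std.Symm (stepRel i A) := ⟨fun _ _ h => stepRel_symm h⟩; exact Std.Symm.symm _ _ (chainIn_iff.1 h).2)⟩

lemma chainIn_trans {i : ℕ} {A : Set Pt} {x y z : Pt}
    (h1 : ChainIn i A x y) (h2 : ChainIn i A y z) : ChainIn i A x z :=
  chainIn_iff.2 ⟨(chainIn_iff.1 h1).1, (chainIn_iff.1 h1).2.trans (chainIn_iff.1 h2).2⟩

lemma chainIn_mono {i : ℕ} {A B : Set Pt} (hAB : A ⊆ B) {x y : Pt}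
    (h : ChainIn i A x y) : ChainIn i B x y := by
  obtain ⟨n, c, h0, hn, hmem, hadj⟩ := h
  exact ⟨n, c, h0, hn, fun k hk => hAB (hmem k hk), hadj⟩

lemma compOf_eq_of_chain {i : ℕ} {A : Set Pt} {p q : Pt} (h : ChainIn i A p q) :
    compOf i A p = compOf i A q := by
  ext y
  exact ⟨fun hy => chainIn_trans (chainIn_symm h) hy, fun hy => chainIn_trans h hy⟩

/-- The row component of a point. -/
def rcOf (i : ℕ) (X : Set Pt) (p : Pt) : Set Pt := compOf i (rowOf X p.2) p

lemma rowOf_subset (X : Set Pt) (k : ℤ) : rowOf X k ⊆ X := Set.inter_subset_left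

lemma mem_rcOf_self {i : ℕ} {X : Set Pt} {p : Pt} (hp : p ∈ X) : p ∈ rcOf i X p :=
  chainIn_refl ⟨hp, rfl⟩

lemma isRowComp_rcOf {i : ℕ} {X : Set Pt} {p : Pt} (hp : p ∈ X) :
    IsRowComp i X (rcOf i X p) := ⟨p.2, p, ⟨hp, rfl⟩, rfl⟩

lemma rowComp_eq_rcOf {i : ℕ} {X : Set Pt} {r : Set Pt} {p : Pt}
    (hr : IsRowComp i X r) (hp : p ∈ r) : r = rcOf i X p := by
  obtain ⟨k, q, hq, rfl⟩ := hr
  have hpk : p ∈ rowOf X k := chainIn_mem_right hp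
  have h2 : p.2 = k := hpk.2
  rw [rcOf, h2]
  exact compOf_eq_of_chain hp

lemma rowComp_mem {i : ℕ} {X : Set Pt} {r : Set Pt} (hr : IsRowComp i X r) :
    ∃ p, p ∈ r ∧ p ∈ X := by
  obtain ⟨k, q, hq, rfl⟩ := hr
  exact ⟨q, chainIn_refl hq, rowOf_subset X k hq⟩

lemma rowComp_subset {i : ℕ} {X : Set Pt} {r : Set Pt} (hr : IsRowComp i X r) :
    r ⊆ X := by
  obtain ⟨k, q, hq, rfl⟩ := hr
  exact fun p hp => rowOf_subset X k (chainIn_mem_right hp)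

lemma mk_eq_of_rtg {i : ℕ} {X : Set Pt} {x y : Pt}
    (h : Relation.ReflTransGen (stepRel i X) x y) (hx : x ∈ X) :
    ∀ hy : y ∈ X,
      Quot.mk (fun a b : X => cAdj i a.1 b.1) ⟨x, hx⟩ =
      Quot.mk (fun a b : X => cAdj i a.1 b.1) ⟨y, hy⟩ := by
  induction h with
  | refl => intro _; rfl
  | tail hab hbc ih =>
    intro hy
    exact (ih hbc.1).trans (Quot.sound hbc.2.2)

lemma rtg_rcg_of_rtg {i : ℕ} {X : Set Pt} {x y : Pt}
    (h : Relation.ReflTransGen (stepRel i X) x y) :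
    Relation.ReflTransGen (rcgAdj i X) (rcOf i X x) (rcOf i X y) := by
  induction h with
  | refl => exact .refl
  | @tail b c hab hbc ih =>
    by_cases hbc' : rcOf i X b = rcOf i X c
    · exact hbc' ▸ ih
    · exact ih.tail ⟨isRowComp_rcOf hbc.1, isRowComp_rcOf hbc.2.1, hbc',
        b, mem_rcOf_self hbc.1, c, mem_rcOf_self hbc.2.1, hbc.2.2⟩

lemma rcg_mk_eq_of_rtg {i : ℕ} {X : Set Pt} {r s : Set Pt}
    (h : Relation.ReflTransGen (rcgAdj i X) r s) (hr : IsRowComp i X r) :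
    ∀ hs : IsRowComp i X s,
      Quot.mk (fun r s : {r : Set Pt // IsRowComp i X r} => rcgAdj i X r.1 s.1) ⟨r, hr⟩ =
      Quot.mk (fun r s : {r : Set Pt // IsRowComp i X r} => rcgAdj i X r.1 s.1) ⟨s, hs⟩ := by
  induction h with
  | refl => intro _; rfl
  | tail hab hbc ih =>
    intro hs
    exact (ih hbc.1).trans (Quot.sound hbc)

/-- the number of `c_i`-components of `X` equals the number of connected
components of the row component graph `R(X,c_i)`; in particular if `X` is
`c_i`-connected then `R(X,c_i)` is connected. -/
theorem stmt6 (i : ℕ) (hi : i = 1 ∨ i = 2) (X : Set Pt) (hX : X.Finite) :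
    Nat.card (Quot (fun a b : X => cAdj i a.1 b.1)) =
      Nat.card (Quot (fun r s : {r : Set Pt // IsRowComp i X r} => rcgAdj i X r.1 s.1)) ∧
    (Conn i X → RCGConnected i X) := by
  classical
  constructor
  · set R1 : X → X → Prop := fun a b => cAdj i a.1 b.1 with hR1def
    set R2 : {r : Set Pt // IsRowComp i X r} → {r : Set Pt // IsRowComp i X r} → Prop :=
      fun r s => rcgAdj i X r.1 s.1 with hR2def
    -- forward map on points
    have hF : ∀ a b : X, R1 a b →
        Quot.mk R2 ⟨rcOf i X a.1, isRowComp_rcOf a.2⟩ =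
        Quot.mk R2 ⟨rcOf i X b.1, isRowComp_rcOf b.2⟩ := by
      intro a b hab
      by_cases h : rcOf i X a.1 = rcOf i X b.1
      · congr 1
        exact Subtype.ext h
      · exact Quot.sound ⟨isRowComp_rcOf a.2, isRowComp_rcOf b.2, h,
          a.1, mem_rcOf_self a.2, b.1, mem_rcOf_self b.2, hab⟩
    let F : Quot R1 → Quot R2 :=
      Quot.lift (fun p : X => Quot.mk R2 ⟨rcOf i X p.1, isRowComp_rcOf p.2⟩) hF
    -- a chosen point in each row component
    let pt : {r : Set Pt // IsRowComp i X r} → X :=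
      fun r => ⟨(rowComp_mem r.2).choose, (rowComp_mem r.2).choose_spec.2⟩
    have hpt : ∀ r : {r : Set Pt // IsRowComp i X r}, (pt r).1 ∈ r.1 :=
      fun r => (rowComp_mem r.2).choose_spec.1
    -- key: the chosen point of a row component is chained in X to any of its points
    have hchain : ∀ (r : {r : Set Pt // IsRowComp i X r}) (a : Pt), a ∈ r.1 →
        ChainIn i X (pt r).1 a := by
      intro r a ha
      have hre : r.1 = rcOf i X (pt r).1 := rowComp_eq_rcOf r.2 (hpt r)
      rw [hre] at ha
      exact chainIn_mono (rowOf_subset X _) ha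
    have hG : ∀ r s : {r : Set Pt // IsRowComp i X r}, R2 r s →
        Quot.mk R1 (pt r) = Quot.mk R1 (pt s) := by
      intro r s h
      obtain ⟨a, ha, b, hb, hab⟩ := h.2.2.2
      have haX : a ∈ X := rowComp_subset r.2 ha
      have hbX : b ∈ X := rowComp_subset s.2 hb
      have e1 : Quot.mk R1 (pt r) = Quot.mk R1 ⟨a, haX⟩ :=
        mk_eq_of_rtg (chainIn_iff.1 (hchain r a ha)).2 (pt r).2 haX
      have e2 : Quot.mk R1 ⟨a, haX⟩ = Quot.mk R1 ⟨b, hbX⟩ := Quot.sound hab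
      have e3 : Quot.mk R1 (pt s) = Quot.mk R1 ⟨b, hbX⟩ :=
        mk_eq_of_rtg (chainIn_iff.1 (hchain s b hb)).2 (pt s).2 hbX
      exact (e1.trans e2).trans e3.symm
    let G : Quot R2 → Quot R1 := Quot.lift (fun r => Quot.mk R1 (pt r)) hG
    have hleft : Function.LeftInverse G F := by
      apply Quot.ind
      intro p
      have t1 : F (Quot.mk R1 p) = Quot.mk R2 ⟨rcOf i X p.1, isRowComp_rcOf p.2⟩ := rfl
      have t2 : G (Quot.mk R2 ⟨rcOf i X p.1, isRowComp_rcOf p.2⟩) =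
          Quot.mk R1 (pt ⟨rcOf i X p.1, isRowComp_rcOf p.2⟩) := rfl
      rw [t1, t2]
      have hmem : p.1 ∈ (⟨rcOf i X p.1, isRowComp_rcOf p.2⟩ :
          {r : Set Pt // IsRowComp i X r}).1 := mem_rcOf_self p.2
      have := mk_eq_of_rtg
        (chainIn_iff.1 (hchain ⟨rcOf i X p.1, isRowComp_rcOf p.2⟩ p.1 hmem)).2
        (pt ⟨rcOf i X p.1, isRowComp_rcOf p.2⟩).2 p.2
      exact this
    have hright : Function.RightInverse G F := by
      apply Quot.ind
      intro r
      have t1 : G (Quot.mk R2 r) = Quot.mk R1 (pt r) := rfl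
      have t2 : F (Quot.mk R1 (pt r)) =
          Quot.mk R2 ⟨rcOf i X (pt r).1, isRowComp_rcOf (pt r).2⟩ := rfl
      rw [t1, t2]
      congr 1
      exact Subtype.ext (rowComp_eq_rcOf r.2 (hpt r)).symm
    exact Nat.card_congr ⟨F, G, hleft, hright⟩
  · intro hConn r s hr hs
    obtain ⟨p, hpr, hpX⟩ := rowComp_mem hr
    obtain ⟨q, hqs, hqX⟩ := rowComp_mem hs
    have h2 := rtg_rcg_of_rtg (chainIn_iff.1 (hConn p hpX q hqX)).2
    rw [rowComp_eq_rcOf hr hpr, rowComp_eq_rcOf hs hqs]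
    exact h2
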